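/- arXiv:1407.7774 — 5 statements merged into one kernel-verified Lean document; each statement's English description precedes it below -/
import Mathlib

section
/- For every integer r ≥ 1, the number of rooted hypermaps with one face and r darts equals r!. That is, the number of orbits of the group H = {τ ∈ Sym_r : τ(1) = 1}, acting by simultaneous conjugation on the set of pairs (f, σ) of permutations of {1,…,r} with f an r-cycle, equals r!. -/
/-- Number of cycles of a permutation, counting fixed points as cycles of length 1
(i.e. the number of orbits). -/
def cyc {r : ℕ} (σ : Equiv.Perm (Fin r)) : ℕ :=
  σ.cycleType.card + (Finset.univ.filter fun x => σ x = x).card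

/-- The equivalence relation on pairs of permutations of {1,…,r} given by simultaneous
conjugation by elements of H = {τ ∈ Sym_r : τ fixes the root element}. -/
def rootedRel (r : ℕ) (hr : 1 ≤ r) : Setoid (Equiv.Perm (Fin r) × Equiv.Perm (Fin r)) where
  r p q := ∃ τ : Equiv.Perm (Fin r), τ ⟨0, hr⟩ = ⟨0, hr⟩ ∧
    q.1 = τ * p.1 * τ⁻¹ ∧ q.2 = τ * p.2 * τ⁻¹
  iseqv := by
    constructor
    · exact fun p => ⟨1, by simp, by simp, by simp⟩
    · rintro p q ⟨τ, h0, h1, h2⟩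
      exact ⟨τ⁻¹, by nth_rewrite 1 [← h0]; exact Equiv.symm_apply_apply τ _,
        by rw [h1]; group, by rw [h2]; group⟩
    · rintro p q s ⟨τ, h0, h1, h2⟩ ⟨τ', h0', h1', h2'⟩
      exact ⟨τ' * τ, by rw [Equiv.Perm.mul_apply, h0, h0'],
        by rw [h1', h1]; group, by rw [h2', h2]; group⟩

section aux
variable {r : ℕ} [NeZero r]

def cc (r : ℕ) [NeZero r] : Equiv.Perm (Fin r) := Equiv.addRight 1

lemma cc_pow_zero : ∀ (n : ℕ) (h : n < r), ((cc r) ^ n) 0 = ⟨n, h⟩ := by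
  intro n
  induction n with
  | zero => intro h; simp [Fin.ext_iff]
  | succ n ih =>
    intro h
    rw [pow_succ', Equiv.Perm.mul_apply, ih (Nat.lt_of_succ_lt h)]
    apply Fin.ext
    simp only [cc, Equiv.coe_addRight, Fin.add_def, Fin.val_one']
    rw [Nat.mod_eq_of_lt (a := 1) (by omega), Nat.mod_eq_of_lt h]

lemma cc_orbit (x : Fin r) : ((cc r) ^ (x : ℕ)) 0 = x := cc_pow_zero x.1 x.2

lemma cc_fix_eq_one {τ : Equiv.Perm (Fin r)} (h0 : τ 0 = 0)
    (hc : τ * cc r = cc r * τ) : τ = 1 := by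
  have hcomm : Commute τ (cc r) := hc
  ext x
  have := congrArg (fun g : Equiv.Perm (Fin r) => g 0) (hcomm.pow_right (x : ℕ))
  simp only [Equiv.Perm.mul_apply] at this
  rw [Equiv.Perm.one_apply, ← cc_orbit x, this, h0]

lemma sameCycle_cc (x y : Fin r) : (cc r).SameCycle x y := by
  have h : ∀ z : Fin r, (cc r).SameCycle 0 z := fun z =>
    ⟨(z : ℕ), by rw [zpow_natCast, cc_orbit]⟩
  exact (h x).symm.trans (h y)

end aux

section aux2
variable {r : ℕ} [NeZero r]

lemma cyc_spec {f : Equiv.Perm (Fin r)} (hf : cyc f = 1) (h2 : 2 ≤ r) :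
    f.IsCycle ∧ f.support = Finset.univ := by
  unfold cyc at hf
  have hne : f ≠ 1 := by
    rintro rfl
    simp [Equiv.Perm.cycleType_one, Finset.filter_true_of_mem] at hf
    omega
  have hcard : Multiset.card f.cycleType ≠ 0 := by
    simp only [ne_eq, Multiset.card_eq_zero]
    rw [Equiv.Perm.cycleType_eq_zero]
    exact hne
  have h1 : Multiset.card f.cycleType = 1 := by omega
  have h0 : (Finset.univ.filter fun x => f x = x).card = 0 := by omega
  refine ⟨Equiv.Perm.card_cycleType_eq_one.mp h1, ?_⟩
  rw [Finset.eq_univ_iff_forall]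
  intro x
  rw [Equiv.Perm.mem_support]
  intro hx
  have := Finset.card_eq_zero.mp h0
  have : x ∈ (Finset.univ.filter fun x => f x = x) := by simp [hx]
  simp [Finset.card_eq_zero.mp h0] at this

lemma cc_isCycle (h2 : 2 ≤ r) : (cc r).IsCycle := by
  refine ⟨0, ?_, fun y _ => sameCycle_cc 0 y⟩
  show (0 + 1 : Fin r) ≠ 0
  have h1 : (1:ℕ) % r = 1 := Nat.mod_eq_of_lt (by omega)
  simp [Fin.ext_iff, Fin.val_one', h1]

lemma cc_support (h2 : 2 ≤ r) : (cc r).support = Finset.univ := by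
  rw [Finset.eq_univ_iff_forall]
  intro x
  rw [Equiv.Perm.mem_support]
  show x + 1 ≠ x
  intro h
  have : (1 : Fin r) = 0 := by
    have := congrArg (fun z => z - x) h
    simpa [add_comm, add_sub_cancel_right] using this
  have h1 : (1:ℕ) % r = 1 := Nat.mod_eq_of_lt (by omega)
  simp [Fin.ext_iff, Fin.val_one', h1] at this

lemma cyc_of_cycle {f : Equiv.Perm (Fin r)} (h1 : f.IsCycle) (h2 : f.support = Finset.univ) :
    cyc f = 1 := by
  unfold cyc
  rw [h1.cycleType]
  have : (Finset.univ.filter fun x => f x = x) = ∅ := by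
    rw [Finset.eq_empty_iff_forall_notMem]
    intro x hx
    simp only [Finset.mem_filter] at hx
    have : x ∈ f.support := h2 ▸ Finset.mem_univ x
    rw [Equiv.Perm.mem_support] at this
    exact this hx.2
  simp [this]

lemma cyc_cc (r : ℕ) [NeZero r] : cyc (cc r) = 1 := by
  rcases lt_or_ge r 2 with h | h
  · have hr1 : r = 1 := by have := NeZero.pos r; omega
    subst hr1
    have : cc 1 = 1 := Subsingleton.elim _ _
    rw [this]
    simp [cyc, Equiv.Perm.cycleType_one]
  · exact cyc_of_cycle (cc_isCycle h) (cc_support h)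

lemma conj_fix {f : Equiv.Perm (Fin r)} (hf : cyc f = 1) :
    ∃ g : Equiv.Perm (Fin r), g 0 = 0 ∧ f = g * cc r * g⁻¹ := by
  have hstep : ∃ g : Equiv.Perm (Fin r), g * cc r * g⁻¹ = f := by
    rcases lt_or_ge r 2 with h | h
    · have hr1 : r = 1 := by have := NeZero.pos r; omega
      subst hr1
      exact ⟨1, by simpa using (Subsingleton.elim (cc 1) f)⟩
    · refine isConj_iff.mp (Equiv.Perm.isConj_iff_cycleType_eq.mpr ?_)
      obtain ⟨hc1, hc2⟩ := cyc_spec hf h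
      rw [(cc_isCycle h).cycleType, hc1.cycleType, cc_support h, hc2]
  obtain ⟨g, hg⟩ := hstep
  refine ⟨g * cc r ^ ((g⁻¹ 0 : Fin r) : ℕ), ?_, ?_⟩
  · rw [Equiv.Perm.mul_apply, cc_orbit]
    exact Equiv.apply_symm_apply g 0
  · rw [← hg]; group

end aux2

/-- There are r! rooted hypermaps with one face and r darts: the number of H-orbits
(under simultaneous conjugation by the stabilizer H of the root) of pairs (f, σ) of
permutations of {1,…,r} with f an r-cycle (i.e. `cyc f = 1`) equals r!. -/
theorem one_face_rooted_hypermap_count (r : ℕ) (hr : 1 ≤ r) :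
    Nat.card {q : Quotient (rootedRel r hr) //
        ∃ p : Equiv.Perm (Fin r) × Equiv.Perm (Fin r),
          cyc p.1 = 1 ∧ Quotient.mk (rootedRel r hr) p = q} = Nat.factorial r := by
  haveI : NeZero r := ⟨by omega⟩
  have hz : (⟨0, hr⟩ : Fin r) = 0 := by
    apply Fin.ext
    simp
  set Φ : Equiv.Perm (Fin r) → {q : Quotient (rootedRel r hr) //
      ∃ p : Equiv.Perm (Fin r) × Equiv.Perm (Fin r),
        cyc p.1 = 1 ∧ Quotient.mk (rootedRel r hr) p = q} :=
    fun σ => ⟨Quotient.mk (rootedRel r hr) (cc r, σ), ⟨(cc r, σ), cyc_cc r, rfl⟩⟩ with hΦ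
  have hbij : Function.Bijective Φ := by
    constructor
    · intro σ σ' h
      have h' : Quotient.mk (rootedRel r hr) (cc r, σ) =
          Quotient.mk (rootedRel r hr) (cc r, σ') := congrArg Subtype.val h
      obtain ⟨τ, h0, h1, h2⟩ := Quotient.exact h'
      rw [hz] at h0
      simp only at h1 h2
      have hcomm : τ * cc r = cc r * τ := by
        nth_rewrite 2 [h1]
        group
      have hτ : τ = 1 := cc_fix_eq_one h0 hcomm
      rw [hτ] at h2
      simpa using h2.symm
    · rintro ⟨q, p, hp, rfl⟩
      obtain ⟨g, hg0, hgf⟩ := conj_fix hp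
      refine ⟨g⁻¹ * p.2 * g, Subtype.ext ?_⟩
      refine Quotient.sound ⟨g, by rw [hz]; exact hg0, hgf, by group⟩
  rw [← Nat.card_eq_of_bijective Φ hbij, Nat.card_eq_fintype_card, Fintype.card_perm,
    Fintype.card_fin]
end

section
/- Fix integers m, n and define, for integers r ≥ 1 and k ≥ 0, the rational numbers F(r,k) = ((−1)^k / r!) · C(r−1,k) · ∏_{j=0}^{r−1}(m−k+j) · ∏_{j=0}^{r−1}(n−k+j) and G(r,k) = ((−1)^k / (r+2)!) · C(r,k−1) · ∏_{j=0}^{r}(m−k+j) · ∏_{j=0}^{r}(n−k+j) · Q(r,k), where C denotes the binomial coefficient (equal to 0 when the lower index is negative or exceeds the upper index) and Q(r,k) = k²r − 3kr² − mnr + 2r³ + k² + km + kn − 7kr − 3mn − mr − nr + 7r² − 4k − m − n + 8r + 3. Then for all r ≥ 1 and all k ≥ 0: (r+3)·F(r+2,k) − (2r+3)(m+n)·F(r+1,k) + r·((m−n)² − (r+1)²)·F(r,k) = G(r,k+1) − G(r,k). -/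
/-- F(r,k) = ((−1)^k / r!) · C(r−1,k) · ∏_{j=0}^{r−1}(m−k+j) · ∏_{j=0}^{r−1}(n−k+j). -/
noncomputable def F (m n : ℤ) (r k : ℕ) : ℚ :=
  ((-1 : ℚ) ^ k / (Nat.factorial r : ℚ)) * (Nat.choose (r - 1) k : ℚ) *
    (∏ j ∈ Finset.range r, ((m : ℚ) - (k : ℚ) + (j : ℚ))) *
    (∏ j ∈ Finset.range r, ((n : ℚ) - (k : ℚ) + (j : ℚ)))

/-- The polynomial Q(r,k) appearing in the Zeilberger certificate. -/
def Q (m n : ℤ) (r k : ℕ) : ℚ :=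
  (k : ℚ) ^ 2 * r - 3 * k * (r : ℚ) ^ 2 - (m : ℚ) * n * r + 2 * (r : ℚ) ^ 3 + (k : ℚ) ^ 2 +
    (k : ℚ) * m + (k : ℚ) * n - 7 * (k : ℚ) * r - 3 * (m : ℚ) * n - (m : ℚ) * r - (n : ℚ) * r +
    7 * (r : ℚ) ^ 2 - 4 * (k : ℚ) - (m : ℚ) - (n : ℚ) + 8 * (r : ℚ) + 3

/-- G(r,k) = ((−1)^k / (r+2)!) · C(r,k−1) · ∏_{j=0}^{r}(m−k+j) · ∏_{j=0}^{r}(n−k+j) · Q(r,k),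
where C(r,k−1) is 0 when k−1 is negative, i.e. when k = 0. -/
noncomputable def G (m n : ℤ) (r k : ℕ) : ℚ :=
  ((-1 : ℚ) ^ k / (Nat.factorial (r + 2) : ℚ)) *
    (if k = 0 then (0 : ℚ) else (Nat.choose r (k - 1) : ℚ)) *
    (∏ j ∈ Finset.range (r + 1), ((m : ℚ) - (k : ℚ) + (j : ℚ))) *
    (∏ j ∈ Finset.range (r + 1), ((n : ℚ) - (k : ℚ) + (j : ℚ))) * Q m n r k

set_option maxHeartbeats 4000000 in
/-- The Zeilberger certificate identity: for all r ≥ 1 and k ≥ 0,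
(r+3)·F(r+2,k) − (2r+3)(m+n)·F(r+1,k) + r((m−n)²−(r+1)²)·F(r,k) = G(r,k+1) − G(r,k). -/
theorem zeilberger_certificate (m n : ℤ) (r : ℕ) (hr : 1 ≤ r) (k : ℕ) :
    ((r : ℚ) + 3) * F m n (r + 2) k -
        (2 * (r : ℚ) + 3) * ((m : ℚ) + (n : ℚ)) * F m n (r + 1) k +
        (r : ℚ) * (((m : ℚ) - (n : ℚ)) ^ 2 - ((r : ℚ) + 1) ^ 2) * F m n r k =
      G m n r (k + 1) - G m n r k := by
  obtain ⟨s, rfl⟩ : ∃ s, r = s + 1 := ⟨r - 1, (Nat.succ_pred_eq_of_pos hr).symm⟩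
  clear hr
  simp only [F, G, Q]
  rw [show s + 1 + 2 - 1 = s + 2 from by omega, show s + 1 + 1 - 1 = s + 1 from by omega,
    show s + 1 - 1 = s from by omega, show k + 1 - 1 = k from by omega,
    if_neg (Nat.succ_ne_zero k)]
  have hf1 : (Nat.factorial (s + 1) : ℚ) = ((s : ℚ) + 1) * (Nat.factorial s : ℚ) := by
    rw [Nat.factorial_succ]; push_cast; ring
  have hf2 : (Nat.factorial (s + 1 + 1) : ℚ) =
      ((s : ℚ) + 2) * (((s : ℚ) + 1) * (Nat.factorial s : ℚ)) := by
    rw [Nat.factorial_succ, Nat.factorial_succ]; push_cast; ring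
  have hf3 : (Nat.factorial (s + 1 + 2) : ℚ) =
      ((s : ℚ) + 3) * (((s : ℚ) + 2) * (((s : ℚ) + 1) * (Nat.factorial s : ℚ))) := by
    rw [show s + 1 + 2 = s + 1 + 1 + 1 from by omega, Nat.factorial_succ, Nat.factorial_succ,
      Nat.factorial_succ]
    push_cast; ring
  rw [hf3, hf2, hf1]
  have hfs : (Nat.factorial s : ℚ) ≠ 0 := Nat.cast_ne_zero.mpr (Nat.factorial_ne_zero s)
  rcases Nat.lt_or_ge k (s + 1) with hk | hk
  · -- main case : k ≤ s
    have hks : k ≤ s := by omega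
    have hu : ((s : ℚ) + 1) - (k : ℚ) ≠ 0 := by
      have : (k : ℚ) ≤ (s : ℚ) := by exact_mod_cast hks
      linarith
    have hv : ((s : ℚ) + 2) - (k : ℚ) ≠ 0 := by
      have : (k : ℚ) ≤ (s : ℚ) := by exact_mod_cast hks
      linarith
    -- binomial recurrences over ℚ
    have hc2 : ((Nat.choose (s + 1) k : ℚ)) * (((s : ℚ) + 1) - (k : ℚ)) =
        (Nat.choose s k : ℚ) * ((s : ℚ) + 1) := by
      have h := congrArg (fun x : ℕ => (x : ℚ)) (Nat.choose_mul_succ_eq s k)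
      have hle : k ≤ s + 1 := by omega
      push_cast [hle] at h
      linarith
    have hc3 : ((Nat.choose (s + 2) k : ℚ)) * (((s : ℚ) + 2) - (k : ℚ)) =
        (Nat.choose (s + 1) k : ℚ) * ((s : ℚ) + 2) := by
      have h := congrArg (fun x : ℕ => (x : ℚ)) (Nat.choose_mul_succ_eq (s + 1) k)
      have hle : k ≤ s + 1 + 1 := by omega
      push_cast [hle] at h
      linarith
    have e2 : ((Nat.choose (s + 1) k : ℚ)) =
        (Nat.choose s k : ℚ) * ((s : ℚ) + 1) / (((s : ℚ) + 1) - (k : ℚ)) := by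
      field_simp
      linear_combination hc2
    have e3 : ((Nat.choose (s + 2) k : ℚ)) =
        (Nat.choose s k : ℚ) * ((s : ℚ) + 1) * ((s : ℚ) + 2) /
          ((((s : ℚ) + 1) - (k : ℚ)) * (((s : ℚ) + 2) - (k : ℚ))) := by
      field_simp
      linear_combination (((s : ℚ) + 1) - (k : ℚ)) * hc3 + ((s : ℚ) + 2) * hc2
    have eG : (if k = 0 then (0 : ℚ) else ((Nat.choose (s + 1) (k - 1) : ℚ))) =
        (Nat.choose s k : ℚ) * ((s : ℚ) + 1) * (k : ℚ) /
          ((((s : ℚ) + 1) - (k : ℚ)) * (((s : ℚ) + 2) - (k : ℚ))) := by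
      rcases Nat.eq_zero_or_pos k with rfl | hk0
      · simp
      · rw [if_neg (by omega)]
        have h := congrArg (fun x : ℕ => (x : ℚ)) (Nat.choose_succ_right_eq (s + 1) (k - 1))
        rw [show k - 1 + 1 = k from by omega] at h
        have hle : k - 1 ≤ s + 1 := by omega
        push_cast [hle, Nat.cast_sub (by omega : 1 ≤ k)] at h
        field_simp
        linear_combination (-(((s : ℚ) + 1) - (k : ℚ))) * h + (k : ℚ) * hc2
    rw [e2, e3, eG]
    -- product rewrites
    have hPm2 : (∏ j ∈ Finset.range (s + 1 + 1), ((m : ℚ) - (k : ℚ) + (j : ℚ))) =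
        (∏ j ∈ Finset.range (s + 1), ((m : ℚ) - (k : ℚ) + (j : ℚ))) *
          ((m : ℚ) - (k : ℚ) + ((s : ℚ) + 1)) := by
      rw [Finset.prod_range_succ]; push_cast; ring
    have hPn2 : (∏ j ∈ Finset.range (s + 1 + 1), ((n : ℚ) - (k : ℚ) + (j : ℚ))) =
        (∏ j ∈ Finset.range (s + 1), ((n : ℚ) - (k : ℚ) + (j : ℚ))) *
          ((n : ℚ) - (k : ℚ) + ((s : ℚ) + 1)) := by
      rw [Finset.prod_range_succ]; push_cast; ring
    have hPm3 : (∏ j ∈ Finset.range (s + 1 + 2), ((m : ℚ) - (k : ℚ) + (j : ℚ))) =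
        (∏ j ∈ Finset.range (s + 1), ((m : ℚ) - (k : ℚ) + (j : ℚ))) *
          ((m : ℚ) - (k : ℚ) + ((s : ℚ) + 1)) * ((m : ℚ) - (k : ℚ) + ((s : ℚ) + 2)) := by
      rw [show s + 1 + 2 = s + 1 + 1 + 1 from by omega, Finset.prod_range_succ,
        Finset.prod_range_succ]
      push_cast; ring
    have hPn3 : (∏ j ∈ Finset.range (s + 1 + 2), ((n : ℚ) - (k : ℚ) + (j : ℚ))) =
        (∏ j ∈ Finset.range (s + 1), ((n : ℚ) - (k : ℚ) + (j : ℚ))) *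
          ((n : ℚ) - (k : ℚ) + ((s : ℚ) + 1)) * ((n : ℚ) - (k : ℚ) + ((s : ℚ) + 2)) := by
      rw [show s + 1 + 2 = s + 1 + 1 + 1 from by omega, Finset.prod_range_succ,
        Finset.prod_range_succ]
      push_cast; ring
    have hPmG : (∏ j ∈ Finset.range (s + 1 + 1), ((m : ℚ) - ((k + 1 : ℕ) : ℚ) + (j : ℚ))) =
        ((m : ℚ) - (k : ℚ) - 1) * ∏ j ∈ Finset.range (s + 1), ((m : ℚ) - (k : ℚ) + (j : ℚ)) := by
      rw [Finset.prod_range_succ']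
      rw [Finset.prod_congr rfl fun j _ =>
        (by push_cast; ring :
          ((m : ℚ) - ((k + 1 : ℕ) : ℚ) + ((j + 1 : ℕ) : ℚ)) = (m : ℚ) - (k : ℚ) + (j : ℚ))]
      push_cast; ring
    have hPnG : (∏ j ∈ Finset.range (s + 1 + 1), ((n : ℚ) - ((k + 1 : ℕ) : ℚ) + (j : ℚ))) =
        ((n : ℚ) - (k : ℚ) - 1) * ∏ j ∈ Finset.range (s + 1), ((n : ℚ) - (k : ℚ) + (j : ℚ)) := by
      rw [Finset.prod_range_succ']
      rw [Finset.prod_congr rfl fun j _ =>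
        (by push_cast; ring :
          ((n : ℚ) - ((k + 1 : ℕ) : ℚ) + ((j + 1 : ℕ) : ℚ)) = (n : ℚ) - (k : ℚ) + (j : ℚ))]
      push_cast; ring
    rw [hPm3, hPn3, hPmG, hPnG, hPm2, hPn2]
    push_cast
    field_simp
    ring
  · rcases Nat.eq_or_lt_of_le hk with h | h
    · -- k = s + 1
      obtain rfl : k = s + 1 := h.symm
      rw [if_neg (Nat.succ_ne_zero s), show s + 1 - 1 = s from by omega,
        show Nat.choose (s + 2) (s + 1) = s + 2 from Nat.choose_succ_self_right (s + 1),
        Nat.choose_succ_self,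
        show Nat.choose (s + 1) s = s + 1 from Nat.choose_succ_self_right s,
        Nat.choose_self]
      have hPm2 : (∏ j ∈ Finset.range (s + 1 + 1), ((m : ℚ) - ((s + 1 : ℕ) : ℚ) + (j : ℚ))) =
          (∏ j ∈ Finset.range (s + 1), ((m : ℚ) - ((s + 1 : ℕ) : ℚ) + (j : ℚ))) * (m : ℚ) := by
        rw [Finset.prod_range_succ]; push_cast; ring
      have hPn2 : (∏ j ∈ Finset.range (s + 1 + 1), ((n : ℚ) - ((s + 1 : ℕ) : ℚ) + (j : ℚ))) =
          (∏ j ∈ Finset.range (s + 1), ((n : ℚ) - ((s + 1 : ℕ) : ℚ) + (j : ℚ))) * (n : ℚ) := by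
        rw [Finset.prod_range_succ]; push_cast; ring
      have hPm3 : (∏ j ∈ Finset.range (s + 1 + 2), ((m : ℚ) - ((s + 1 : ℕ) : ℚ) + (j : ℚ))) =
          (∏ j ∈ Finset.range (s + 1), ((m : ℚ) - ((s + 1 : ℕ) : ℚ) + (j : ℚ))) * (m : ℚ) *
            ((m : ℚ) + 1) := by
        rw [show s + 1 + 2 = s + 1 + 1 + 1 from by omega, Finset.prod_range_succ,
          Finset.prod_range_succ]
        push_cast; ring
      have hPn3 : (∏ j ∈ Finset.range (s + 1 + 2), ((n : ℚ) - ((s + 1 : ℕ) : ℚ) + (j : ℚ))) =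
          (∏ j ∈ Finset.range (s + 1), ((n : ℚ) - ((s + 1 : ℕ) : ℚ) + (j : ℚ))) * (n : ℚ) *
            ((n : ℚ) + 1) := by
        rw [show s + 1 + 2 = s + 1 + 1 + 1 from by omega, Finset.prod_range_succ,
          Finset.prod_range_succ]
        push_cast; ring
      have hPmG : (∏ j ∈ Finset.range (s + 1 + 1), ((m : ℚ) - ((s + 1 + 1 : ℕ) : ℚ) + (j : ℚ))) =
          ((m : ℚ) - (s : ℚ) - 2) *
            ∏ j ∈ Finset.range (s + 1), ((m : ℚ) - ((s + 1 : ℕ) : ℚ) + (j : ℚ)) := by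
        rw [Finset.prod_range_succ']
        rw [Finset.prod_congr rfl fun j _ =>
          (by push_cast; ring :
            ((m : ℚ) - ((s + 1 + 1 : ℕ) : ℚ) + ((j + 1 : ℕ) : ℚ)) =
              (m : ℚ) - ((s + 1 : ℕ) : ℚ) + (j : ℚ))]
        push_cast; ring
      have hPnG : (∏ j ∈ Finset.range (s + 1 + 1), ((n : ℚ) - ((s + 1 + 1 : ℕ) : ℚ) + (j : ℚ))) =
          ((n : ℚ) - (s : ℚ) - 2) *
            ∏ j ∈ Finset.range (s + 1), ((n : ℚ) - ((s + 1 : ℕ) : ℚ) + (j : ℚ)) := by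
        rw [Finset.prod_range_succ']
        rw [Finset.prod_congr rfl fun j _ =>
          (by push_cast; ring :
            ((n : ℚ) - ((s + 1 + 1 : ℕ) : ℚ) + ((j + 1 : ℕ) : ℚ)) =
              (n : ℚ) - ((s + 1 : ℕ) : ℚ) + (j : ℚ))]
        push_cast; ring
      rw [hPm3, hPn3, hPmG, hPnG, hPm2, hPn2]
      push_cast
      field_simp
      ring
    · rcases Nat.eq_or_lt_of_le h with h2 | h2
      · -- k = s + 2
        obtain rfl : k = s + 2 := h2.symm
        rw [if_neg (show ¬s + 2 = 0 from by omega), show s + 2 - 1 = s + 1 from by omega,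
          Nat.choose_self, Nat.choose_self,
          Nat.choose_eq_zero_of_lt (show s + 1 < s + 2 from by omega),
          Nat.choose_eq_zero_of_lt (show s < s + 2 from by omega)]
        have hPm3 : (∏ j ∈ Finset.range (s + 1 + 2), ((m : ℚ) - ((s + 2 : ℕ) : ℚ) + (j : ℚ))) =
            (∏ j ∈ Finset.range (s + 1 + 1), ((m : ℚ) - ((s + 2 : ℕ) : ℚ) + (j : ℚ))) *
              (m : ℚ) := by
          rw [show s + 1 + 2 = s + 1 + 1 + 1 from by omega, Finset.prod_range_succ]
          push_cast; ring
        have hPn3 : (∏ j ∈ Finset.range (s + 1 + 2), ((n : ℚ) - ((s + 2 : ℕ) : ℚ) + (j : ℚ))) =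
            (∏ j ∈ Finset.range (s + 1 + 1), ((n : ℚ) - ((s + 2 : ℕ) : ℚ) + (j : ℚ))) *
              (n : ℚ) := by
          rw [show s + 1 + 2 = s + 1 + 1 + 1 from by omega, Finset.prod_range_succ]
          push_cast; ring
        rw [hPm3, hPn3]
        push_cast
        field_simp
        ring
      · -- k ≥ s + 3 : all terms vanish
        rw [Nat.choose_eq_zero_of_lt (show s + 2 < k from by omega),
          Nat.choose_eq_zero_of_lt (show s + 1 < k from by omega),
          Nat.choose_eq_zero_of_lt (show s < k from by omega),
          if_neg (show ¬k = 0 from by omega),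
          Nat.choose_eq_zero_of_lt (show s + 1 < k - 1 from by omega)]
        push_cast
        ring
end

section
/- For all integers r, m, n ≥ 1, the generating function P_r(m,n) = ∑_{σ ∈ Sym_r} m^{cyc(σ)} n^{cyc(ξ_r σ)} is symmetric in m and n: ∑_{σ ∈ Sym_r} m^{cyc(σ)} n^{cyc(ξ_r σ)} = ∑_{σ ∈ Sym_r} n^{cyc(σ)} m^{cyc(ξ_r σ)}. -/
lemma cyc_inv {r : ℕ} (σ : Equiv.Perm (Fin r)) : cyc σ⁻¹ = cyc σ := by
  unfold cyc
  rw [Equiv.Perm.cycleType_inv]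
  have : (Finset.univ.filter fun x => σ⁻¹ x = x) = Finset.univ.filter fun x => σ x = x := by
    ext x
    simp only [Finset.mem_filter, Finset.mem_univ, true_and]
    constructor
    · intro h; conv_lhs => rw [← h]; simp
    · intro h; conv_lhs => rw [← h]; simp
  rw [this]

lemma cyc_conj {r : ℕ} (τ σ : Equiv.Perm (Fin r)) : cyc (τ * σ * τ⁻¹) = cyc σ := by
  unfold cyc
  rw [Equiv.Perm.cycleType_conj]
  congr 1
  apply Finset.card_bij (fun x _ => (τ⁻¹ : Equiv.Perm (Fin r)) x)
  · intro x hx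
    simp only [Finset.mem_filter, Finset.mem_univ, true_and,
      Equiv.Perm.mul_apply] at hx ⊢
    have := congrArg (⇑(τ⁻¹ : Equiv.Perm (Fin r))) (Finset.mem_filter.mp hx).2
    simpa using this
  · intro x _ y _ h; exact Equiv.injective _ h
  · intro x hx
    simp only [Finset.mem_filter, Finset.mem_univ, true_and] at hx
    exact ⟨τ x, by rw [Finset.mem_filter]; simp [hx], by simp⟩

/-- Symmetry of the one-face rooted hypermap generating function:
∑_{σ ∈ Sym_r} m^{cyc σ} n^{cyc (ξ_r σ)} = ∑_{σ ∈ Sym_r} n^{cyc σ} m^{cyc (ξ_r σ)}. -/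
theorem one_face_hypermap_gf_symmetric (r m n : ℕ) (hr : 1 ≤ r) (hm : 1 ≤ m) (hn : 1 ≤ n) :
    ∑ σ : Equiv.Perm (Fin r), (m : ℤ) ^ cyc σ * (n : ℤ) ^ cyc (finRotate r * σ) =
      ∑ σ : Equiv.Perm (Fin r), (n : ℤ) ^ cyc σ * (m : ℤ) ^ cyc (finRotate r * σ) := by
  set ξ := finRotate r
  refine Fintype.sum_equiv ((Equiv.mulLeft ξ).trans (Equiv.inv _)) _ _ fun σ => ?_
  simp only [Equiv.trans_apply, Equiv.inv_apply, Equiv.coe_mulLeft]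
  rw [cyc_inv, mul_inv_rev]
  have : ξ * (σ⁻¹ * ξ⁻¹) = ξ * σ⁻¹ * ξ⁻¹ := by group
  rw [this, cyc_conj, cyc_inv, mul_comm]
end

section
/- For every integer r ≥ 1 and every permutation σ of {1,…,r}, cyc(σ) + cyc(ξ_r σ) ≤ r + 1, with equality attained (e.g. at σ the identity); hence the polynomial P_r(m,m) = ∑_{σ ∈ Sym_r} m^{cyc(σ)+cyc(ξ_r σ)} has degree exactly r + 1. -/
section Aux

open Equiv Equiv.Perm Finset

variable {α : Type*} [Fintype α] [DecidableEq α]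

/-- `cyc` for a general finite type. -/
def cycA (σ : Perm α) : ℕ :=
  σ.cycleType.card + (Finset.univ.filter fun x => σ x = x).card

/-- The setoid whose classes are the orbits of `σ`. -/
def scSetoid (σ : Perm α) : Setoid α :=
  ⟨σ.SameCycle, ⟨fun x => SameCycle.refl σ x, fun h => h.symm, fun h h' => h.trans h'⟩⟩

instance scSetoidDecidable (σ : Perm α) : DecidableRel (scSetoid σ).r :=
  fun x y => (inferInstance : Decidable (σ.SameCycle x y))

instance quotScFintype (σ : Perm α) : Fintype (Quotient (scSetoid σ)) :=
  @Quotient.fintype α _ (scSetoid σ) (scSetoidDecidable σ)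

theorem card_quot (σ : Perm α) :
    Fintype.card (Quotient (scSetoid σ)) = cycA σ := by
  classical
  set g : α → ({c // c ∈ σ.cycleFactorsFinset} ⊕ {x // σ x = x}) := fun x =>
    if h : σ x = x then Sum.inr ⟨x, h⟩ else
      Sum.inl ⟨σ.cycleOf x, cycleOf_mem_cycleFactorsFinset_iff.mpr (mem_support.mpr h)⟩ with hg
  have hwd : ∀ x y, σ.SameCycle x y → g x = g y := by
    intro x y hxy
    by_cases hx : σ x = x
    · obtain ⟨i, hi⟩ := hxy
      rw [zpow_apply_eq_self_of_apply_eq_self hx] at hi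
      subst hi; rfl
    · have hy : ¬ σ y = y := by
        intro hy
        obtain ⟨i, hi⟩ := hxy.symm
        rw [zpow_apply_eq_self_of_apply_eq_self hy] at hi
        exact hx (hi ▸ hy)
      simp only [hg, dif_neg hx, dif_neg hy]
      exact congrArg Sum.inl (Subtype.ext hxy.cycleOf_eq)
  set G : Quotient (scSetoid σ) → ({c // c ∈ σ.cycleFactorsFinset} ⊕ {x // σ x = x}) :=
    Quotient.lift g hwd with hG
  have hbij : Function.Bijective G := by
    constructor
    · intro q₁ q₂
      refine Quotient.inductionOn₂ q₁ q₂ (fun x y h => Quotient.sound ?_)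
      change g x = g y at h
      by_cases hx : σ x = x <;> by_cases hy : σ y = y <;>
        simp only [hg, dif_pos, dif_neg, hx, hy] at h
      · cases h; exact SameCycle.refl σ x
      · exact absurd h (by simp)
      · exact absurd h (by simp)
      · have hc : σ.cycleOf x = σ.cycleOf y := congrArg Subtype.val (Sum.inl.inj h)
        have hy' : y ∈ (σ.cycleOf y).support :=
          mem_support_cycleOf_iff.mpr ⟨SameCycle.refl σ y, mem_support.mpr hy⟩
        rw [← hc] at hy'
        exact (mem_support_cycleOf_iff.mp hy').1
    · rintro (⟨c, hc⟩ | ⟨x, hx⟩)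
      · have hcyc := (mem_cycleFactorsFinset_iff.mp hc).1
        obtain ⟨x, hx, -⟩ := hcyc
        have hxs : x ∈ c.support := mem_support.mpr hx
        have hσx : ¬ σ x = x := by
          intro h
          have := (mem_cycleFactorsFinset_iff.mp hc).2 x hxs
          exact (mem_support.mp hxs) (this.trans h)
        refine ⟨Quotient.mk _ x, ?_⟩
        have hceq : c = σ.cycleOf x := cycle_is_cycleOf hxs hc
        show g x = _
        simp only [hg, dif_neg hσx]
        exact congrArg Sum.inl (Subtype.ext hceq.symm)
      · refine ⟨Quotient.mk _ x, ?_⟩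
        show g x = _
        simp only [hg, dif_pos hx]
  rw [Fintype.card_of_bijective hbij, Fintype.card_sum, Fintype.card_coe,
    Fintype.card_subtype]
  have hct : σ.cycleType.card = σ.cycleFactorsFinset.card := by
    rw [cycleType_def, Multiset.card_map]; rfl
  simp only [cycA, hct]

/-- The subspace of functions invariant under `σ`. -/
def fixSp (σ : Perm α) : Submodule ℚ (α → ℚ) where
  carrier := {f | ∀ x, f (σ x) = f x}
  add_mem' := fun hf hg x => by simp [hf x, hg x]
  zero_mem' := fun x => rfl
  smul_mem' := fun c f hf x => by simp [hf x]

theorem mem_fixSp {σ : Perm α} {f : α → ℚ} : f ∈ fixSp σ ↔ ∀ x, f (σ x) = f x := Iff.rfl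

theorem finrank_fixSp (σ : Perm α) :
    Module.finrank ℚ (fixSp σ) = cycA σ := by
  classical
  set Q := Quotient (scSetoid σ) with hQ
  set Φ : (Q → ℚ) →ₗ[ℚ] (α → ℚ) := LinearMap.funLeft ℚ ℚ (Quotient.mk (scSetoid σ)) with hΦ
  have hsurj : Function.Surjective (Quotient.mk (scSetoid σ)) :=
    fun q => Quotient.inductionOn q (fun x => ⟨x, rfl⟩)
  have hinj : Function.Injective Φ := LinearMap.funLeft_injective_of_surjective ℚ ℚ _ hsurj
  have hrange : LinearMap.range Φ = fixSp σ := by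
    ext f
    constructor
    · rintro ⟨u, rfl⟩ x
      show u (Quotient.mk _ (σ x)) = u (Quotient.mk _ x)
      exact congrArg u (Quotient.sound (SameCycle.symm ⟨1, by simp⟩))
    · intro hf
      have key : ∀ (i : ℤ) (x : α), f ((σ ^ i) x) = f x := by
        intro i
        induction i using Int.induction_on with
        | zero => simp
        | succ k ih =>
          intro x
          have h1 : (σ ^ ((k : ℤ) + 1)) x = σ ((σ ^ (k : ℤ)) x) := by
            rw [add_comm, zpow_add, zpow_one, mul_apply]
          rw [h1, hf, ih]
        | pred k ih =>
          intro x
          have h1 : (σ ^ (-(k : ℤ) - 1)) x = σ⁻¹ ((σ ^ (-(k : ℤ))) x) := by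
            have h2 : (-(k : ℤ) - 1) = -1 + -(k : ℤ) := by ring
            rw [h2, zpow_add, mul_apply, zpow_neg_one]
          have hfi : ∀ y, f (σ⁻¹ y) = f y := by
            intro y
            have h3 := hf (σ⁻¹ y)
            rw [← Equiv.Perm.mul_apply, mul_inv_cancel, Equiv.Perm.one_apply] at h3
            exact h3.symm
          rw [h1, hfi, ih]
      refine ⟨Quotient.lift f (fun a b hab => ?_), funext fun x => rfl⟩
      obtain ⟨i, hi⟩ := hab
      rw [← hi, key]
  have h1 : Module.finrank ℚ (fixSp σ) = Module.finrank ℚ (Q → ℚ) := by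
    rw [← hrange]
    exact (LinearEquiv.finrank_eq (LinearEquiv.ofInjective Φ hinj)).symm
  rw [h1, Module.finrank_fintype_fun_eq_card]
  exact card_quot σ

theorem cycA_mul_le (σ τ : Perm α) :
    cycA σ + cycA τ ≤ Fintype.card α + cycA (σ * τ) := by
  classical
  have hmono : fixSp σ ⊓ fixSp τ ≤ fixSp (σ * τ) := by
    intro f hf
    rw [Submodule.mem_inf] at hf
    intro x
    have h1 := hf.1 (τ x)
    have h2 := hf.2 x
    rw [mul_apply, h1, h2]
  have h2 := Submodule.finrank_sup_add_finrank_inf_eq (fixSp σ) (fixSp τ)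
  have h3 : Module.finrank ℚ ↥(fixSp σ ⊔ fixSp τ) ≤ Fintype.card α := by
    have := Submodule.finrank_le (fixSp σ ⊔ fixSp τ)
    rwa [Module.finrank_fintype_fun_eq_card] at this
  have h4 : Module.finrank ℚ ↥(fixSp σ ⊓ fixSp τ) ≤ Module.finrank ℚ ↥(fixSp (σ * τ)) :=
    Submodule.finrank_mono hmono
  rw [← finrank_fixSp σ, ← finrank_fixSp τ, ← finrank_fixSp (σ * τ)]
  omega

theorem cycA_inv (σ : Perm α) : cycA σ⁻¹ = cycA σ := by
  have hfix : fixSp σ⁻¹ = fixSp σ := by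
    ext f
    rw [mem_fixSp, mem_fixSp]
    constructor <;> intro hf x
    · have h := hf (σ x); rw [← Equiv.Perm.mul_apply, inv_mul_cancel, Equiv.Perm.one_apply] at h; exact h.symm
    · have h := hf (σ⁻¹ x); rw [← Equiv.Perm.mul_apply, mul_inv_cancel, Equiv.Perm.one_apply] at h; exact h.symm
  rw [← finrank_fixSp, ← finrank_fixSp, hfix]

end Aux

open Equiv Equiv.Perm Finset Polynomial

theorem cycA_finRotate (r : ℕ) (hr : 1 ≤ r) : cycA (finRotate r) = 1 := by
  match r, hr with
  | 1, _ =>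
    have h1 : finRotate 1 = 1 := by decide
    rw [cycA, h1, cycleType_one]
    simp
  | (n + 2), _ =>
    rw [cycA, cycleType_finRotate]
    have hfilter : (Finset.univ.filter fun x => finRotate (n + 2) x = x) = ∅ := by
      ext x
      simp only [Finset.mem_filter, Finset.mem_univ, true_and, Finset.notMem_empty,
        iff_false]
      intro h
      have hx : x ∈ (finRotate (n + 2)).support := by
        rw [support_finRotate]; exact Finset.mem_univ x
      exact (mem_support.mp hx) h
    rw [hfilter]
    simp

theorem cycA_one (r : ℕ) : cycA (1 : Equiv.Perm (Fin r)) = r := by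
  rw [cycA, cycleType_one]
  simp

theorem cyc_eq_cycA {r : ℕ} (σ : Equiv.Perm (Fin r)) : cyc σ = cycA σ := rfl

/-- cyc(σ) + cyc(ξ_r σ) ≤ r + 1 for every σ ∈ Sym_r, with equality at σ = 1; hence the
polynomial P_r(m,m) = ∑_σ m^{cyc σ + cyc(ξ_r σ)} has degree exactly r + 1. -/
theorem one_face_hypermap_genus_bound (r : ℕ) (hr : 1 ≤ r) :
    (∀ σ : Equiv.Perm (Fin r), cyc σ + cyc (finRotate r * σ) ≤ r + 1) ∧
    cyc (1 : Equiv.Perm (Fin r)) + cyc (finRotate r * 1) = r + 1 ∧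
    (∑ σ : Equiv.Perm (Fin r),
        (Polynomial.X : Polynomial ℤ) ^ (cyc σ + cyc (finRotate r * σ))).natDegree = r + 1 := by
  have hbound : ∀ σ : Equiv.Perm (Fin r), cyc σ + cyc (finRotate r * σ) ≤ r + 1 := by
    intro σ
    have h := cycA_mul_le (finRotate r * σ) σ⁻¹
    rw [mul_inv_cancel_right, cycA_inv, Fintype.card_fin, cycA_finRotate r hr] at h
    rw [cyc_eq_cycA, cyc_eq_cycA]
    omega
  have heq : cyc (1 : Equiv.Perm (Fin r)) + cyc (finRotate r * 1) = r + 1 := by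
    rw [mul_one, cyc_eq_cycA, cyc_eq_cycA, cycA_one, cycA_finRotate r hr]
  refine ⟨hbound, heq, ?_⟩
  set e : Equiv.Perm (Fin r) → ℕ := fun σ => cyc σ + cyc (finRotate r * σ) with he
  apply le_antisymm
  · apply Polynomial.natDegree_sum_le_of_forall_le
    intro σ _
    calc ((Polynomial.X : Polynomial ℤ) ^ (e σ)).natDegree ≤ e σ := by
          simp [Polynomial.natDegree_X_pow]
      _ ≤ r + 1 := hbound σ
  · apply Polynomial.le_natDegree_of_ne_zero
    rw [Polynomial.finset_sum_coeff]
    have hc : ∀ σ : Equiv.Perm (Fin r),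
        ((Polynomial.X : Polynomial ℤ) ^ (e σ)).coeff (r + 1)
          = if r + 1 = e σ then 1 else 0 := by
      intro σ; rw [Polynomial.coeff_X_pow]
    rw [Finset.sum_congr rfl (fun σ _ => hc σ)]
    rw [Finset.sum_boole]
    have hmem : (1 : Equiv.Perm (Fin r)) ∈ Finset.univ.filter fun σ => r + 1 = e σ := by
      simp only [Finset.mem_filter, Finset.mem_univ, true_and]
      exact heq.symm
    have hpos : 0 < (Finset.univ.filter fun σ : Equiv.Perm (Fin r) => r + 1 = e σ).card :=
      Finset.card_pos.mpr ⟨1, hmem⟩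
    intro h
    rw [Int.natCast_eq_zero] at h
    omega
end

section
/- Let a, b ≥ 1 be integers and let ξ_{a,b} be the permutation of {1,…,a+b} consisting of the two cycles (1 2 … a)(a+1 a+2 … a+b). Then the number of permutations σ of {1,…,a+b} such that the subgroup generated by ξ_{a,b} and σ acts transitively on {1,…,a+b} equals (a+b)! − a!·b!. -/
/-- The permutation ξ_{a,b} of {1,…,a+b} consisting of the two cycles
(1 2 … a)(a+1 a+2 … a+b). -/
def xiab (a b : ℕ) : Equiv.Perm (Fin (a + b)) :=
  finSumFinEquiv.symm.trans ((Equiv.sumCongr (finRotate a) (finRotate b)).trans finSumFinEquiv)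

open Equiv Sum

section aux

variable {a b : ℕ}

lemma xiab_apply (s : Fin a ⊕ Fin b) :
    xiab a b (finSumFinEquiv s) =
      finSumFinEquiv (Equiv.sumCongr (finRotate a) (finRotate b) s) := by
  simp [xiab]

lemma sumCongr_pow_inl {α β : Type*} (f : Equiv.Perm α) (g : Equiv.Perm β) (n : ℕ) (k : α) :
    ((Equiv.sumCongr f g) ^ n) (inl k) = inl ((f ^ n) k) := by
  induction n generalizing k with
  | zero => simp
  | succ n ih =>
      rw [pow_succ, pow_succ, Equiv.Perm.mul_apply, Equiv.Perm.mul_apply]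
      simp only [Equiv.sumCongr_apply, Sum.map_inl]
      exact ih (f k)

lemma sumCongr_pow_inr {α β : Type*} (f : Equiv.Perm α) (g : Equiv.Perm β) (n : ℕ) (k : β) :
    ((Equiv.sumCongr f g) ^ n) (inr k) = inr ((g ^ n) k) := by
  induction n generalizing k with
  | zero => simp
  | succ n ih =>
      rw [pow_succ, pow_succ, Equiv.Perm.mul_apply, Equiv.Perm.mul_apply]
      simp only [Equiv.sumCongr_apply, Sum.map_inr]
      exact ih (g k)

lemma xiab_pow (n : ℕ) (s : Fin a ⊕ Fin b) :
    ((xiab a b) ^ n) (finSumFinEquiv s) =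
      finSumFinEquiv (((Equiv.sumCongr (finRotate a) (finRotate b)) ^ n) s) := by
  induction n generalizing s with
  | zero => simp
  | succ n ih =>
      rw [pow_succ, pow_succ, Equiv.Perm.mul_apply, Equiv.Perm.mul_apply, xiab_apply, ih]

open Fin.NatCast Fin.CommRing in
lemma finRotate_pow (m n : ℕ) (x : Fin (m + 1)) :
    ((finRotate (m + 1)) ^ n) x = x + (n : Fin (m + 1)) := by
  induction n generalizing x with
  | zero => simp
  | succ n ih =>
      rw [pow_succ, Equiv.Perm.mul_apply, finRotate_succ_apply, ih]
      push_cast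
      ring

open Fin.NatCast in
lemma finRotate_reach : ∀ (m : ℕ) (k k' : Fin m), ∃ n : ℕ, ((finRotate m) ^ n) k = k'
  | 0, k, _ => k.elim0
  | m + 1, k, k' => ⟨((k' - k : Fin (m + 1)) : ℕ), by
      rw [finRotate_pow, Fin.cast_val_eq_self, add_sub_cancel]⟩

lemma exists_rep (x : Fin (a + b)) :
    (∃ k : Fin a, x = finSumFinEquiv (inl k)) ∨ (∃ k : Fin b, x = finSumFinEquiv (inr k)) := by
  rcases h : finSumFinEquiv.symm x with k | k
  · exact Or.inl ⟨k, by rw [← h, Equiv.apply_symm_apply]⟩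
  · exact Or.inr ⟨k, by rw [← h, Equiv.apply_symm_apply]⟩

lemma val_inl (k : Fin a) : ((finSumFinEquiv (inl k) : Fin (a + b)) : ℕ) = (k : ℕ) := by
  simp

lemma val_inr (k : Fin b) : ((finSumFinEquiv (inr k) : Fin (a + b)) : ℕ) = a + (k : ℕ) := by
  simp

lemma reach (i j : Fin (a + b)) (h : (i : ℕ) < a ↔ (j : ℕ) < a) :
    ∃ n : ℕ, ((xiab a b) ^ n) i = j := by
  rcases exists_rep i with ⟨k, rfl⟩ | ⟨k, rfl⟩ <;>
    rcases exists_rep j with ⟨k', rfl⟩ | ⟨k', rfl⟩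
  · obtain ⟨n, hn⟩ := finRotate_reach a k k'
    exact ⟨n, by rw [xiab_pow, sumCongr_pow_inl, hn]⟩
  · exfalso; rw [val_inl, val_inr] at h; have := k.isLt; omega
  · exfalso; rw [val_inl, val_inr] at h; have := k'.isLt; omega
  · obtain ⟨n, hn⟩ := finRotate_reach b k k'
    exact ⟨n, by rw [xiab_pow, sumCongr_pow_inr, hn]⟩

lemma trans_of_cross (σ : Equiv.Perm (Fin (a + b))) (x : Fin (a + b))
    (hx : (x : ℕ) < a) (hσx : a ≤ (σ x : ℕ)) :
    ∀ i j : Fin (a + b), ∃ g ∈ Subgroup.closure {xiab a b, σ}, g i = j := by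
  have hξ : xiab a b ∈ Subgroup.closure {xiab a b, σ} :=
    Subgroup.subset_closure (Set.mem_insert _ _)
  have hσ : σ ∈ Subgroup.closure {xiab a b, σ} :=
    Subgroup.subset_closure (Set.mem_insert_of_mem _ rfl)
  have key : ∀ j : Fin (a + b), ∃ g ∈ Subgroup.closure {xiab a b, σ}, g x = j := by
    intro j
    by_cases hj : (j : ℕ) < a
    · obtain ⟨n, hn⟩ := reach x j (iff_of_true hx hj)
      exact ⟨(xiab a b) ^ n, pow_mem hξ n, hn⟩
    · obtain ⟨n, hn⟩ := reach (σ x) j (iff_of_false (not_lt.mpr hσx) hj)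
      exact ⟨(xiab a b) ^ n * σ, mul_mem (pow_mem hξ n) hσ, by
        rw [Equiv.Perm.mul_apply, hn]⟩
  intro i j
  obtain ⟨g, hg, hgx⟩ := key i
  obtain ⟨h', hh, hhx⟩ := key j
  refine ⟨h' * g⁻¹, mul_mem hh (inv_mem hg), ?_⟩
  rw [Equiv.Perm.mul_apply, ← hgx, (show g⁻¹ (g x) = x from Equiv.symm_apply_apply g x), hhx]

/-- block-preserving predicate -/
def Bpred (a b : ℕ) (σ : Equiv.Perm (Fin (a + b))) : Prop :=
  ∀ x : Fin (a + b), (x : ℕ) < a → ((σ x : ℕ) < a)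

lemma xiab_pres : Bpred a b (xiab a b) := by
  intro x hx
  rcases exists_rep x with ⟨k, rfl⟩ | ⟨k, rfl⟩
  · rw [xiab_apply]
    simpa using (finRotate a k).isLt
  · rw [val_inr] at hx; omega

lemma inv_pres (g : Equiv.Perm (Fin (a + b))) (hg : Bpred a b g) : Bpred a b g⁻¹ := by
  intro y hy
  have hinj : Function.Injective
      (fun x : {x : Fin (a + b) // (x : ℕ) < a} => (⟨g x.1, hg x.1 x.2⟩ : {x : Fin (a + b) // (x : ℕ) < a})) := by
    intro u v huv
    have := congrArg Subtype.val huv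
    exact Subtype.ext (g.injective this)
  have hsurj := Finite.injective_iff_surjective.mp hinj
  obtain ⟨⟨x, hxa⟩, hx⟩ := hsurj ⟨y, hy⟩
  have : g x = y := congrArg Subtype.val hx
  rw [← this, (show g⁻¹ (g x) = x from Equiv.symm_apply_apply g x)]
  exact hxa

lemma closure_pres (σ : Equiv.Perm (Fin (a + b))) (hB : Bpred a b σ) :
    ∀ g ∈ Subgroup.closure {xiab a b, σ}, Bpred a b g := by
  intro g hg
  induction hg using Subgroup.closure_induction with
  | mem x hx =>
      rcases hx with rfl | hx
      · exact xiab_pres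
      · rw [Set.mem_singleton_iff] at hx; subst hx; exact hB
  | one => intro x hx; simpa using hx
  | mul x y hx hy ihx ihy =>
      intro z hz
      rw [Equiv.Perm.mul_apply]
      exact ihx _ (ihy z hz)
  | inv x hx ih => exact inv_pres x ih

lemma not_trans (σ : Equiv.Perm (Fin (a + b))) (ha : 1 ≤ a) (hb : 1 ≤ b)
    (hB : Bpred a b σ) :
    ¬ (∀ i j : Fin (a + b), ∃ g ∈ Subgroup.closure {xiab a b, σ}, g i = j) := by
  intro h
  have hab : a < a + b := by omega
  obtain ⟨g, hg, hgi⟩ := h ⟨0, by omega⟩ ⟨a, hab⟩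
  have := closure_pres σ hB g hg ⟨0, by omega⟩ (by simpa using (show 0 < a by omega))
  rw [hgi] at this
  simp at this

lemma symm_mem_range_inl_iff (y : Fin (a + b)) :
    finSumFinEquiv.symm y ∈ Set.range (inl : Fin a → Fin a ⊕ Fin b) ↔ (y : ℕ) < a := by
  rcases exists_rep y with ⟨k, rfl⟩ | ⟨k, rfl⟩
  · simp [Equiv.symm_apply_apply, val_inl, k.isLt]
  · simp [Equiv.symm_apply_apply, val_inr]

lemma card_B (ha : 1 ≤ a) (hb : 1 ≤ b) :
    Nat.card {σ : Equiv.Perm (Fin (a + b)) // Bpred a b σ} =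
      Nat.factorial a * Nat.factorial b := by
  have hiff : ∀ σ : Equiv.Perm (Fin (a + b)), Bpred a b σ ↔
      Set.MapsTo (Equiv.permCongr finSumFinEquiv.symm σ)
        (Set.range (inl : Fin a → Fin a ⊕ Fin b)) (Set.range inl) := by
    intro σ
    constructor
    · rintro hB s ⟨k, rfl⟩
      rw [Equiv.permCongr_apply]
      simp only [Equiv.symm_symm]
      rw [symm_mem_range_inl_iff]
      exact hB _ (by simpa using k.isLt)
    · intro hM x hx
      rcases exists_rep x with ⟨k, rfl⟩ | ⟨k, rfl⟩
      · have := hM ⟨k, rfl⟩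
        rw [Equiv.permCongr_apply] at this
        simp only [Equiv.symm_symm] at this
        rwa [symm_mem_range_inl_iff] at this
      · rw [val_inr] at hx; omega
  have E1 : {σ : Equiv.Perm (Fin (a + b)) // Bpred a b σ} ≃
      {τ : Equiv.Perm (Fin a ⊕ Fin b) //
        Set.MapsTo τ (Set.range (inl : Fin a → Fin a ⊕ Fin b)) (Set.range inl)} :=
    Equiv.subtypeEquiv (Equiv.permCongr finSumFinEquiv.symm) hiff
  have E2 : {τ : Equiv.Perm (Fin a ⊕ Fin b) //
      Set.MapsTo τ (Set.range (inl : Fin a → Fin a ⊕ Fin b)) (Set.range inl)} ≃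
      (Equiv.Perm.sumCongrHom (Fin a) (Fin b)).range := by
    refine Equiv.subtypeEquivRight fun τ => ⟨Equiv.Perm.mem_sumCongrHom_range_of_perm_mapsTo_inl, ?_⟩
    rintro ⟨⟨π, ρ⟩, rfl⟩ s ⟨k, rfl⟩
    exact ⟨π k, rfl⟩
  have E3 : (Equiv.Perm.sumCongrHom (Fin a) (Fin b)).range ≃
      Equiv.Perm (Fin a) × Equiv.Perm (Fin b) :=
    (MonoidHom.ofInjective Equiv.Perm.sumCongrHom_injective).symm.toEquiv
  rw [Nat.card_congr ((E1.trans E2).trans E3), Nat.card_prod]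
  simp [Nat.card_eq_fintype_card, Fintype.card_perm]

end aux

/-- The number of permutations σ of {1,…,a+b} such that the subgroup generated by ξ_{a,b}
and σ acts transitively on {1,…,a+b} equals (a+b)! − a!·b!. -/
theorem transitive_pair_count (a b : ℕ) (ha : 1 ≤ a) (hb : 1 ≤ b) :
    Nat.card {σ : Equiv.Perm (Fin (a + b)) //
        ∀ i j : Fin (a + b), ∃ g ∈ Subgroup.closure {xiab a b, σ}, g i = j} =
      Nat.factorial (a + b) - Nat.factorial a * Nat.factorial b := by
  classical
  have hP : ∀ σ : Equiv.Perm (Fin (a + b)),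
      (∀ i j : Fin (a + b), ∃ g ∈ Subgroup.closure {xiab a b, σ}, g i = j) ↔
        ¬ Bpred a b σ := by
    intro σ
    constructor
    · intro h hB; exact not_trans σ ha hb hB h
    · intro h
      rw [Bpred] at h
      push_neg at h
      obtain ⟨x, hx, hσx⟩ := h
      exact trans_of_cross σ x hx hσx
  rw [Nat.card_congr (Equiv.subtypeEquivRight hP)]
  rw [Nat.card_eq_fintype_card, Fintype.card_subtype_compl]
  have h1 : Fintype.card {σ : Equiv.Perm (Fin (a + b)) // Bpred a b σ} =
      Nat.factorial a * Nat.factorial b := by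
    rw [← Nat.card_eq_fintype_card]; exact card_B ha hb
  rw [h1, Fintype.card_perm, Fintype.card_fin]
end
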